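/- arXiv:2004.08446 — 8 statements merged into one kernel-verified Lean document; each statement's English description precedes it below -/
import Mathlib

section
/- Let n1, n2, n3 be integers with n1 ≥ 2, n2 ≥ 1 and n3 ≥ 4. Then for every quadruple of integers (x1, x2, x3, x4), not all zero, one has 3*x1^2 + 2*n1*x2^2 + (2*n2+1)*x3^2 + (2*n3+1)*x4^2 + 2*x1*x3 + 2*x1*x4 ≥ 3. Equivalently, this quantity equals x1^2 + 2*n1*x2^2 + 2*n2*x3^2 + 2*n3*x4^2 + (x1+x3)^2 + (x1+x4)^2 and is at least 3 whenever (x1,x2,x3,x4) ≠ (0,0,0,0). -/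
/-- Case 3 of Lemma 3.3: the norm form of the rank-4 lattice with Gram matrix
`[[3,0,1,1],[0,2n₁,0,0],[1,0,2n₂+1,0],[1,0,0,2n₃+1]]` equals
`x₁² + 2n₁x₂² + 2n₂x₃² + 2n₃x₄² + (x₁+x₃)² + (x₁+x₄)²` and takes values ≥ 3 on
nonzero integer vectors. -/
theorem stmt_2 (n1 n2 n3 : ℤ) (hn1 : 2 ≤ n1) (hn2 : 1 ≤ n2) (hn3 : 4 ≤ n3)
    (x1 x2 x3 x4 : ℤ) (hx : ¬(x1 = 0 ∧ x2 = 0 ∧ x3 = 0 ∧ x4 = 0)) :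
    3 * x1 ^ 2 + 2 * n1 * x2 ^ 2 + (2 * n2 + 1) * x3 ^ 2 + (2 * n3 + 1) * x4 ^ 2
        + 2 * x1 * x3 + 2 * x1 * x4
      = x1 ^ 2 + 2 * n1 * x2 ^ 2 + 2 * n2 * x3 ^ 2 + 2 * n3 * x4 ^ 2
        + (x1 + x3) ^ 2 + (x1 + x4) ^ 2 ∧
    3 ≤ 3 * x1 ^ 2 + 2 * n1 * x2 ^ 2 + (2 * n2 + 1) * x3 ^ 2 + (2 * n3 + 1) * x4 ^ 2
        + 2 * x1 * x3 + 2 * x1 * x4 := by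

  have key : ∀ z : ℤ, z ≠ 0 → 1 ≤ z ^ 2 := by
    intro z hz
    have h := Int.one_le_abs (by simpa using hz)
    nlinarith [sq_abs z, sq_nonneg (|z| - 1)]
  refine ⟨by ring, ?_⟩
  by_cases h1 : x1 = 0
  · subst h1
    by_cases h2 : x2 = 0
    · subst h2
      by_cases h3 : x3 = 0
      · subst h3
        have h4 : x4 ≠ 0 := by tauto
        nlinarith [key x4 h4]
      · nlinarith [key x3 h3, sq_nonneg x4, mul_nonneg (by linarith : (0:ℤ) ≤ 2*n3) (sq_nonneg x4)]
    · nlinarith [key x2 h2, sq_nonneg x3, sq_nonneg x4,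
        mul_nonneg (by linarith : (0:ℤ) ≤ 2*n2) (sq_nonneg x3),
        mul_nonneg (by linarith : (0:ℤ) ≤ 2*n3) (sq_nonneg x4)]
  · have hA : 1 ≤ 2 * n2 * x3 ^ 2 + (x1 + x3) ^ 2 := by
      by_cases h3 : x1 + x3 = 0
      · have h3' : x3 ≠ 0 := by intro h; apply h1; omega
        nlinarith [key x3 h3', sq_nonneg (x1 + x3)]
      · nlinarith [key (x1 + x3) h3, mul_nonneg (by linarith : (0:ℤ) ≤ 2*n2) (sq_nonneg x3)]
    have hB : 1 ≤ 2 * n3 * x4 ^ 2 + (x1 + x4) ^ 2 := by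
      by_cases h4 : x1 + x4 = 0
      · have h4' : x4 ≠ 0 := by intro h; apply h1; omega
        nlinarith [key x4 h4', sq_nonneg (x1 + x4)]
      · nlinarith [key (x1 + x4) h4, mul_nonneg (by linarith : (0:ℤ) ≤ 2*n3) (sq_nonneg x4)]
    nlinarith [key x1 h1, mul_nonneg (by linarith : (0:ℤ) ≤ 2*n1) (sq_nonneg x2)]
end

section
/- Let n1, n2, n3 be integers with n1 ≥ 1, n2 ≥ 1 and n3 ≥ 4. Then for every quadruple of integers (x1, x2, x3, x4), not all zero, one has 3*x1^2 + (2*n1+1)*x2^2 + (2*n2+1)*x3^2 + (2*n3+1)*x4^2 + 2*x1*x2 + 2*x1*x3 + 2*x1*x4 ≥ 3. Equivalently, this quantity equals 2*n1*x2^2 + 2*n2*x3^2 + 2*n3*x4^2 + (x1+x2)^2 + (x1+x3)^2 + (x1+x4)^2 and is at least 3 whenever (x1,x2,x3,x4) ≠ (0,0,0,0). -/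
lemma one_le_sq_of_ne {a : ℤ} (h : a ≠ 0) : 1 ≤ a ^ 2 := by
  rcases lt_or_gt_of_ne h with h | h <;> nlinarith

/-- Case 4 of Lemma 3.3: the norm form of the rank-4 lattice with Gram matrix
`[[3,1,1,1],[1,2n₁+1,0,0],[1,0,2n₂+1,0],[1,0,0,2n₃+1]]` equals
`2n₁x₂² + 2n₂x₃² + 2n₃x₄² + (x₁+x₂)² + (x₁+x₃)² + (x₁+x₄)²` and takes values
≥ 3 on nonzero integer vectors. -/
theorem stmt_3 (n1 n2 n3 : ℤ) (hn1 : 1 ≤ n1) (hn2 : 1 ≤ n2) (hn3 : 4 ≤ n3)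
    (x1 x2 x3 x4 : ℤ) (hx : ¬(x1 = 0 ∧ x2 = 0 ∧ x3 = 0 ∧ x4 = 0)) :
    3 * x1 ^ 2 + (2 * n1 + 1) * x2 ^ 2 + (2 * n2 + 1) * x3 ^ 2 + (2 * n3 + 1) * x4 ^ 2
        + 2 * x1 * x2 + 2 * x1 * x3 + 2 * x1 * x4
      = 2 * n1 * x2 ^ 2 + 2 * n2 * x3 ^ 2 + 2 * n3 * x4 ^ 2
        + (x1 + x2) ^ 2 + (x1 + x3) ^ 2 + (x1 + x4) ^ 2 ∧
    3 ≤ 3 * x1 ^ 2 + (2 * n1 + 1) * x2 ^ 2 + (2 * n2 + 1) * x3 ^ 2 + (2 * n3 + 1) * x4 ^ 2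
        + 2 * x1 * x2 + 2 * x1 * x3 + 2 * x1 * x4 := by
  refine ⟨by ring, ?_⟩
  have h2 := sq_nonneg x2
  have h3 := sq_nonneg x3
  have h4 := sq_nonneg x4
  have h12 := sq_nonneg (x1 + x2)
  have h13 := sq_nonneg (x1 + x3)
  have h14 := sq_nonneg (x1 + x4)
  rcases eq_or_ne x2 0 with e2 | e2
  · rcases eq_or_ne x3 0 with e3 | e3
    · rcases eq_or_ne x4 0 with e4 | e4
      · have e1 : x1 ≠ 0 := fun h => hx ⟨h, e2, e3, e4⟩
        have := one_le_sq_of_ne e1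
        subst e2 e3 e4; nlinarith
      · have := one_le_sq_of_ne e4
        rcases eq_or_ne (x1 + x4) 0 with f | f
        · have e1 : x1 ≠ 0 := by intro h; apply e4; omega
          have := one_le_sq_of_ne e1
          subst e2 e3; nlinarith
        · have := one_le_sq_of_ne f; nlinarith
    · have := one_le_sq_of_ne e3
      rcases eq_or_ne (x1 + x3) 0 with f | f
      · have e1 : x1 ≠ 0 := by intro h; apply e3; omega
        have := one_le_sq_of_ne e1
        rcases eq_or_ne x4 0 with e4 | e4
        · subst e2 e4; nlinarith
        · have := one_le_sq_of_ne e4; nlinarith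
      · have := one_le_sq_of_ne f; nlinarith
  · have := one_le_sq_of_ne e2
    rcases eq_or_ne (x1 + x2) 0 with f | f
    · have e1 : x1 ≠ 0 := by intro h; apply e2; omega
      have := one_le_sq_of_ne e1
      rcases eq_or_ne x3 0 with e3 | e3
      · rcases eq_or_ne x4 0 with e4 | e4
        · subst e3 e4; nlinarith
        · have := one_le_sq_of_ne e4; nlinarith
      · have := one_le_sq_of_ne e3; nlinarith
    · have := one_le_sq_of_ne f; nlinarith
end

section
/- Let n1, n2 be integers with n1 ≥ 2 and n2 ≥ 2, and let m3, m4 be integers with m3 ≥ 2 and m4 ≥ 2. Then the real symmetric 5×5 matrix [[3,0,0,0,0],[0,2n1,0,0,0],[0,0,2n2,0,0],[0,0,0,2*m3^2,m3*m4],[0,0,0,m3*m4,2*m4^2]] is positive definite, and for every quintuple of integers (x1,...,x5), not all zero, one has 3*x1^2 + 2*n1*x2^2 + 2*n2*x3^2 + 2*m3^2*x4^2 + 2*m3*m4*x4*x5 + 2*m4^2*x5^2 ≥ 3. -/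
set_option maxHeartbeats 1000000


/-- Case n = 4 of Proposition 3.5: the Gram matrix of the rank-5 lattice
`⟨h², α₁, α₂, m₃·a₁, m₄·a₂⟩` is positive definite, and its norm form takes
values ≥ 3 on nonzero integer vectors. -/
theorem stmt_4 (n1 n2 m3 m4 : ℤ) (hn1 : 2 ≤ n1) (hn2 : 2 ≤ n2)
    (hm3 : 2 ≤ m3) (hm4 : 2 ≤ m4) :
    (!![(3 : ℝ), 0, 0, 0, 0;
        0, 2 * (n1 : ℝ), 0, 0, 0;
        0, 0, 2 * (n2 : ℝ), 0, 0;
        0, 0, 0, 2 * (m3 : ℝ) ^ 2, (m3 : ℝ) * (m4 : ℝ);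
        0, 0, 0, (m3 : ℝ) * (m4 : ℝ), 2 * (m4 : ℝ) ^ 2]).PosDef ∧
    ∀ x1 x2 x3 x4 x5 : ℤ, ¬(x1 = 0 ∧ x2 = 0 ∧ x3 = 0 ∧ x4 = 0 ∧ x5 = 0) →
      3 ≤ 3 * x1 ^ 2 + 2 * n1 * x2 ^ 2 + 2 * n2 * x3 ^ 2 + 2 * m3 ^ 2 * x4 ^ 2
          + 2 * m3 * m4 * x4 * x5 + 2 * m4 ^ 2 * x5 ^ 2 := by
  have hn1' : (2 : ℝ) ≤ (n1 : ℝ) := by exact_mod_cast hn1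
  have hn2' : (2 : ℝ) ≤ (n2 : ℝ) := by exact_mod_cast hn2
  have hm3' : (2 : ℝ) ≤ (m3 : ℝ) := by exact_mod_cast hm3
  have hm4' : (2 : ℝ) ≤ (m4 : ℝ) := by exact_mod_cast hm4
  constructor
  · constructor
    · ext i j
      fin_cases i <;> fin_cases j <;>
        simp [Matrix.conjTranspose_apply, Matrix.vecHead, Matrix.vecTail]
    · intro x hx
      have key : (x.sum fun i xi ↦ x.sum fun j xj ↦ star xi * (!![(3 : ℝ), 0, 0, 0, 0;
        0, 2 * (n1 : ℝ), 0, 0, 0;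
        0, 0, 2 * (n2 : ℝ), 0, 0;
        0, 0, 0, 2 * (m3 : ℝ) ^ 2, (m3 : ℝ) * (m4 : ℝ);
        0, 0, 0, (m3 : ℝ) * (m4 : ℝ), 2 * (m4 : ℝ) ^ 2]) i j * xj)
          = 3 * (x 0) ^ 2 + 2 * n1 * (x 1) ^ 2 + 2 * n2 * (x 2) ^ 2
            + ((m3 : ℝ) * x 3 + (m4 : ℝ) * x 4) ^ 2
            + ((m3 : ℝ) * x 3) ^ 2 + ((m4 : ℝ) * x 4) ^ 2 := by
        simp [Finsupp.sum_fintype, Fin.sum_univ_five,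
          Matrix.vecHead, Matrix.vecTail]
        ring
      rw [key]
      by_contra hle
      push_neg at hle
      have c1 : (0:ℝ) ≤ 2 * n1 * (x 1) ^ 2 := by positivity
      have c2 : (0:ℝ) ≤ 2 * n2 * (x 2) ^ 2 := by positivity
      have c0 : (0:ℝ) ≤ 3 * (x 0) ^ 2 := by positivity
      have cA : (0:ℝ) ≤ ((m3 : ℝ) * x 3 + (m4 : ℝ) * x 4) ^ 2 := sq_nonneg _
      have c3 : (0:ℝ) ≤ ((m3 : ℝ) * x 3) ^ 2 := sq_nonneg _
      have c4 : (0:ℝ) ≤ ((m4 : ℝ) * x 4) ^ 2 := sq_nonneg _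
      have z0 : x 0 = 0 := by
        have : (x 0) ^ 2 ≤ 0 := by nlinarith
        exact sq_eq_zero_iff.mp (le_antisymm this (sq_nonneg _))
      have z1 : x 1 = 0 := by
        have : 2 * (x 1) ^ 2 ≤ 2 * (n1:ℝ) * (x 1)^2 := by nlinarith [sq_nonneg (x 1)]
        have h2 : (x 1) ^ 2 ≤ 0 := by nlinarith
        exact sq_eq_zero_iff.mp (le_antisymm h2 (sq_nonneg _))
      have z2 : x 2 = 0 := by
        have : 2 * (x 2) ^ 2 ≤ 2 * (n2:ℝ) * (x 2)^2 := by nlinarith [sq_nonneg (x 2)]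
        have h2 : (x 2) ^ 2 ≤ 0 := by nlinarith
        exact sq_eq_zero_iff.mp (le_antisymm h2 (sq_nonneg _))
      have hm3pos : (0:ℝ) < (m3:ℝ) := by linarith
      have hm4pos : (0:ℝ) < (m4:ℝ) := by linarith
      have z3 : x 3 = 0 := by
        have h2 : ((m3:ℝ) * x 3) ^ 2 ≤ 0 := by nlinarith
        have := sq_eq_zero_iff.mp (le_antisymm h2 (sq_nonneg _))
        exact (mul_eq_zero.mp this).resolve_left (ne_of_gt hm3pos)
      have z4 : x 4 = 0 := by
        have h2 : ((m4:ℝ) * x 4) ^ 2 ≤ 0 := by nlinarith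
        have := sq_eq_zero_iff.mp (le_antisymm h2 (sq_nonneg _))
        exact (mul_eq_zero.mp this).resolve_left (ne_of_gt hm4pos)
      apply hx
      ext j
      fin_cases j <;> assumption
  · intro x1 x2 x3 x4 x5 h
    have h1 : x1 ≠ 0 ∨ x2 ≠ 0 ∨ x3 ≠ 0 ∨ x4 ≠ 0 ∨ x5 ≠ 0 := by tauto
    have sq1 : ∀ y : ℤ, y ≠ 0 → 1 ≤ y ^ 2 := by
      intro y hy
      nlinarith [Int.one_le_abs (by simpa using hy), sq_abs y, abs_nonneg y]
    have hm3sq : (4:ℤ) ≤ m3 ^ 2 := by nlinarith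
    have hm4sq : (4:ℤ) ≤ m4 ^ 2 := by nlinarith
    have hb1 : 0 ≤ 2 * n1 * x2 ^ 2 := by positivity
    have hb2 : 0 ≤ 2 * n2 * x3 ^ 2 := by positivity
    have hb0 : 0 ≤ 3 * x1 ^ 2 := by positivity
    have hA : 0 ≤ 2 * m3 ^ 2 * x4 ^ 2 + 2 * m3 * m4 * x4 * x5 + 2 * m4 ^ 2 * x5 ^ 2 := by
      nlinarith [sq_nonneg (m3 * x4 + m4 * x5), sq_nonneg (m3 * x4), sq_nonneg (m4 * x5)]
    rcases h1 with h | h | h | h | h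
    · nlinarith [sq1 _ h]
    · have k := mul_le_mul hn1 (sq1 _ h) (by norm_num) (by linarith : (0:ℤ) ≤ n1)
      nlinarith [k]
    · have k := mul_le_mul hn2 (sq1 _ h) (by norm_num) (by linarith : (0:ℤ) ≤ n2)
      nlinarith [k]
    · have k : (4:ℤ) ≤ m3 ^ 2 * x4 ^ 2 := by nlinarith [sq1 _ h]
      have : (4:ℤ) ≤ 2 * m3 ^ 2 * x4 ^ 2 + 2 * m3 * m4 * x4 * x5 + 2 * m4 ^ 2 * x5 ^ 2 := by
        nlinarith [sq_nonneg (m3 * x4 + m4 * x5), sq_nonneg (m4 * x5)]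
      linarith
    · have k : (4:ℤ) ≤ m4 ^ 2 * x5 ^ 2 := by nlinarith [sq1 _ h]
      have : (4:ℤ) ≤ 2 * m3 ^ 2 * x4 ^ 2 + 2 * m3 * m4 * x4 * x5 + 2 * m4 ^ 2 * x5 ^ 2 := by
        nlinarith [sq_nonneg (m3 * x4 + m4 * x5), sq_nonneg (m3 * x4)]
      linarith
end

section
/- Let n1, n2 be integers with n1 ≥ 2 and n2 ≥ 2, and let m3, m4 be integers with m3 ≥ 2 and m4 ≥ 2. Then for every quintuple of integers (x1,...,x5), not all zero, one has 3*x1^2 + 2*n1*x2^2 + 2*n2*x3^2 + 2*m3^2*x4^2 + (2*m4^2+1)*x5^2 + 2*m3*m4*x4*x5 + 2*x1*x5 ≥ 3. Equivalently, this quantity equals 2*x1^2 + 2*n1*x2^2 + 2*n2*x3^2 + m3^2*x4^2 + m4^2*x5^2 + (m3*x4 + m4*x5)^2 + (x1+x5)^2 and is at least 3 whenever (x1,...,x5) ≠ 0. -/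
lemma one_le_sq_aux {x : ℤ} (h : x ≠ 0) : 1 ≤ x ^ 2 := by
  rcases h.lt_or_gt with h | h <;> nlinarith

/-- Case 2 of the case n = 4 of Theorem 3.7: the norm form of the rank-5 lattice
with Gram matrix `[[3,0,0,0,1],[0,2n₁,0,0,0],[0,0,2n₂,0,0],[0,0,0,2m₃²,m₃m₄],
[1,0,0,m₃m₄,2m₄²+1]]` equals
`2x₁² + 2n₁x₂² + 2n₂x₃² + m₃²x₄² + m₄²x₅² + (m₃x₄+m₄x₅)² + (x₁+x₅)²`
and takes values ≥ 3 on nonzero integer vectors. -/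
theorem stmt_5 (n1 n2 m3 m4 : ℤ) (hn1 : 2 ≤ n1) (hn2 : 2 ≤ n2)
    (hm3 : 2 ≤ m3) (hm4 : 2 ≤ m4)
    (x1 x2 x3 x4 x5 : ℤ) (hx : ¬(x1 = 0 ∧ x2 = 0 ∧ x3 = 0 ∧ x4 = 0 ∧ x5 = 0)) :
    3 * x1 ^ 2 + 2 * n1 * x2 ^ 2 + 2 * n2 * x3 ^ 2 + 2 * m3 ^ 2 * x4 ^ 2
        + (2 * m4 ^ 2 + 1) * x5 ^ 2 + 2 * m3 * m4 * x4 * x5 + 2 * x1 * x5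
      = 2 * x1 ^ 2 + 2 * n1 * x2 ^ 2 + 2 * n2 * x3 ^ 2 + m3 ^ 2 * x4 ^ 2 + m4 ^ 2 * x5 ^ 2
        + (m3 * x4 + m4 * x5) ^ 2 + (x1 + x5) ^ 2 ∧
    3 ≤ 3 * x1 ^ 2 + 2 * n1 * x2 ^ 2 + 2 * n2 * x3 ^ 2 + 2 * m3 ^ 2 * x4 ^ 2
        + (2 * m4 ^ 2 + 1) * x5 ^ 2 + 2 * m3 * m4 * x4 * x5 + 2 * x1 * x5 := by
  have heq : 3 * x1 ^ 2 + 2 * n1 * x2 ^ 2 + 2 * n2 * x3 ^ 2 + 2 * m3 ^ 2 * x4 ^ 2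
        + (2 * m4 ^ 2 + 1) * x5 ^ 2 + 2 * m3 * m4 * x4 * x5 + 2 * x1 * x5
      = 2 * x1 ^ 2 + 2 * n1 * x2 ^ 2 + 2 * n2 * x3 ^ 2 + m3 ^ 2 * x4 ^ 2 + m4 ^ 2 * x5 ^ 2
        + (m3 * x4 + m4 * x5) ^ 2 + (x1 + x5) ^ 2 := by ring
  refine ⟨heq, ?_⟩
  rw [heq]
  push_neg at hx
  have h1 : (0:ℤ) ≤ n1 * x2 ^ 2 := by positivity
  have h2 : (0:ℤ) ≤ n2 * x3 ^ 2 := by positivity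
  have h3 : (0:ℤ) ≤ (m3 * x4 + m4 * x5) ^ 2 := sq_nonneg _
  have h4 : (0:ℤ) ≤ (x1 + x5) ^ 2 := sq_nonneg _
  rcases eq_or_ne x1 0 with h | h
  · rcases eq_or_ne x2 0 with ha | ha
    · rcases eq_or_ne x3 0 with hb | hb
      · rcases eq_or_ne x4 0 with hc | hc
        · have h5 := one_le_sq_aux (hx h ha hb hc)
          nlinarith [mul_nonneg (by linarith : (0:ℤ) ≤ m4 - 2) (by linarith : (0:ℤ) ≤ x5 ^ 2 - 1),
            sq_nonneg x4, sq_nonneg m4, sq_nonneg x1]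
        · have hd := one_le_sq_aux hc
          nlinarith [mul_nonneg (by linarith : (0:ℤ) ≤ m3 - 2) (by linarith : (0:ℤ) ≤ x4 ^ 2 - 1),
            sq_nonneg x5, sq_nonneg x1, sq_nonneg m3, sq_nonneg x4]
      · have hd := one_le_sq_aux hb
        nlinarith [mul_nonneg (by linarith : (0:ℤ) ≤ n2 - 2) (by linarith : (0:ℤ) ≤ x3 ^ 2 - 1),
          sq_nonneg x1, sq_nonneg x4, sq_nonneg x5, sq_nonneg (m3 * x4), sq_nonneg (m4 * x5)]
    · have hd := one_le_sq_aux ha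
      nlinarith [mul_nonneg (by linarith : (0:ℤ) ≤ n1 - 2) (by linarith : (0:ℤ) ≤ x2 ^ 2 - 1),
        sq_nonneg x1, sq_nonneg x4, sq_nonneg x5, sq_nonneg (m3 * x4), sq_nonneg (m4 * x5)]
  · have hd := one_le_sq_aux h
    rcases eq_or_ne x5 0 with he | he
    · subst he
      nlinarith [sq_nonneg x4, sq_nonneg (m3 * x4)]
    · have hf := one_le_sq_aux he
      nlinarith [mul_nonneg (by linarith : (0:ℤ) ≤ m4 - 2) (by linarith : (0:ℤ) ≤ x5 ^ 2 - 1),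
        sq_nonneg x4, sq_nonneg m4, sq_nonneg (m3 * x4)]
end

section
/- Let n1, n2 be integers with n1 ≥ 2 and n2 ≥ 2, and let m3, m4 be integers with m3 ≥ 2 and m4 ≥ 2. Then for every quintuple of integers (x1,...,x5), not all zero, one has 3*x1^2 + 2*n1*x2^2 + 2*n2*x3^2 + (2*m3^2+1)*x4^2 + (2*m4^2+1)*x5^2 + 2*m3*m4*x4*x5 + 2*x1*x4 + 2*x1*x5 ≥ 3. Equivalently, this quantity equals x1^2 + 2*n1*x2^2 + 2*n2*x3^2 + m3^2*x4^2 + m4^2*x5^2 + (m3*x4 + m4*x5)^2 + (x1+x4)^2 + (x1+x5)^2 and is at least 3 whenever (x1,...,x5) ≠ 0. -/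
lemma aux_sq_sq (a b : ℤ) (ha : 2 ≤ a) (hb : b ≠ 0) : 4 ≤ a ^ 2 * b ^ 2 := by
  have h1 : 1 ≤ b ^ 2 := by nlinarith [Int.one_le_abs hb, sq_abs b, abs_nonneg b]
  nlinarith

lemma aux_two (n b : ℤ) (hn : 2 ≤ n) (hb : b ≠ 0) : 4 ≤ 2 * n * b ^ 2 := by
  have h1 : 1 ≤ b ^ 2 := by nlinarith [Int.one_le_abs hb, sq_abs b, abs_nonneg b]
  nlinarith

/-- Case 3 of the case n = 4 of Theorem 3.7: the norm form of the rank-5 lattice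
with Gram matrix `[[3,0,0,1,1],[0,2n₁,0,0,0],[0,0,2n₂,0,0],[1,0,0,2m₃²+1,m₃m₄],
[1,0,0,m₃m₄,2m₄²+1]]` equals
`x₁² + 2n₁x₂² + 2n₂x₃² + m₃²x₄² + m₄²x₅² + (m₃x₄+m₄x₅)² + (x₁+x₄)² + (x₁+x₅)²`
and takes values ≥ 3 on nonzero integer vectors. -/
theorem stmt_6 (n1 n2 m3 m4 : ℤ) (hn1 : 2 ≤ n1) (hn2 : 2 ≤ n2)
    (hm3 : 2 ≤ m3) (hm4 : 2 ≤ m4)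
    (x1 x2 x3 x4 x5 : ℤ) (hx : ¬(x1 = 0 ∧ x2 = 0 ∧ x3 = 0 ∧ x4 = 0 ∧ x5 = 0)) :
    3 * x1 ^ 2 + 2 * n1 * x2 ^ 2 + 2 * n2 * x3 ^ 2 + (2 * m3 ^ 2 + 1) * x4 ^ 2
        + (2 * m4 ^ 2 + 1) * x5 ^ 2 + 2 * m3 * m4 * x4 * x5 + 2 * x1 * x4 + 2 * x1 * x5
      = x1 ^ 2 + 2 * n1 * x2 ^ 2 + 2 * n2 * x3 ^ 2 + m3 ^ 2 * x4 ^ 2 + m4 ^ 2 * x5 ^ 2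
        + (m3 * x4 + m4 * x5) ^ 2 + (x1 + x4) ^ 2 + (x1 + x5) ^ 2 ∧
    3 ≤ 3 * x1 ^ 2 + 2 * n1 * x2 ^ 2 + 2 * n2 * x3 ^ 2 + (2 * m3 ^ 2 + 1) * x4 ^ 2
        + (2 * m4 ^ 2 + 1) * x5 ^ 2 + 2 * m3 * m4 * x4 * x5 + 2 * x1 * x4
        + 2 * x1 * x5 := by
  have heq : 3 * x1 ^ 2 + 2 * n1 * x2 ^ 2 + 2 * n2 * x3 ^ 2 + (2 * m3 ^ 2 + 1) * x4 ^ 2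
        + (2 * m4 ^ 2 + 1) * x5 ^ 2 + 2 * m3 * m4 * x4 * x5 + 2 * x1 * x4 + 2 * x1 * x5
      = x1 ^ 2 + 2 * n1 * x2 ^ 2 + 2 * n2 * x3 ^ 2 + m3 ^ 2 * x4 ^ 2 + m4 ^ 2 * x5 ^ 2
        + (m3 * x4 + m4 * x5) ^ 2 + (x1 + x4) ^ 2 + (x1 + x5) ^ 2 := by ring
  refine ⟨heq, ?_⟩
  rw [heq]
  have t1 : (0:ℤ) ≤ x1 ^ 2 := sq_nonneg _
  have t2 : (0:ℤ) ≤ 2 * n1 * x2 ^ 2 := by positivity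
  have t3 : (0:ℤ) ≤ 2 * n2 * x3 ^ 2 := by positivity
  have t4 : (0:ℤ) ≤ m3 ^ 2 * x4 ^ 2 := by positivity
  have t5 : (0:ℤ) ≤ m4 ^ 2 * x5 ^ 2 := by positivity
  have t6 : (0:ℤ) ≤ (m3 * x4 + m4 * x5) ^ 2 := sq_nonneg _
  have t7 : (0:ℤ) ≤ (x1 + x4) ^ 2 := sq_nonneg _
  have t8 : (0:ℤ) ≤ (x1 + x5) ^ 2 := sq_nonneg _
  rcases ne_or_eq x2 0 with h | h2
  · have := aux_two n1 x2 hn1 h; linarith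
  rcases ne_or_eq x3 0 with h | h3
  · have := aux_two n2 x3 hn2 h; linarith
  rcases ne_or_eq x4 0 with h | h4
  · have := aux_sq_sq m3 x4 hm3 h; linarith
  rcases ne_or_eq x5 0 with h | h5
  · have := aux_sq_sq m4 x5 hm4 h; linarith
  have h1 : x1 ≠ 0 := by tauto
  have hx1 : 1 ≤ x1 ^ 2 := by nlinarith [Int.one_le_abs h1, sq_abs x1, abs_nonneg x1]
  subst h4 h5
  simp only [add_zero]
  linarith
end

section
/- Let n1, n2 be integers with n1 ≥ 2 and n2 ≥ 1, and let m3, m4 be integers with m3 ≥ 2 and m4 ≥ 2. Then for every quintuple of integers (x1,...,x5), not all zero, one has 3*x1^2 + 2*n1*x2^2 + (2*n2+1)*x3^2 + (2*m3^2+1)*x4^2 + (2*m4^2+1)*x5^2 + 2*m3*m4*x4*x5 + 2*x1*x3 + 2*x1*x4 + 2*x1*x5 ≥ 3. Equivalently, this quantity equals 2*n1*x2^2 + 2*n2*x3^2 + m3^2*x4^2 + m4^2*x5^2 + (m3*x4 + m4*x5)^2 + (x1+x3)^2 + (x1+x4)^2 + (x1+x5)^2 and is at least 3 whenever (x1,...,x5)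 ≠ 0. -/
/-- Case 4 of the case n = 4 of Theorem 3.7: the norm form of the rank-5 lattice
with Gram matrix `[[3,0,1,1,1],[0,2n₁,0,0,0],[1,0,2n₂+1,0,0],[1,0,0,2m₃²+1,m₃m₄],
[1,0,0,m₃m₄,2m₄²+1]]` equals
`2n₁x₂² + 2n₂x₃² + m₃²x₄² + m₄²x₅² + (m₃x₄+m₄x₅)² + (x₁+x₃)² + (x₁+x₄)² + (x₁+x₅)²`
and takes values ≥ 3 on nonzero integer vectors. -/
theorem stmt_7 (n1 n2 m3 m4 : ℤ) (hn1 : 2 ≤ n1) (hn2 : 1 ≤ n2)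
    (hm3 : 2 ≤ m3) (hm4 : 2 ≤ m4)
    (x1 x2 x3 x4 x5 : ℤ) (hx : ¬(x1 = 0 ∧ x2 = 0 ∧ x3 = 0 ∧ x4 = 0 ∧ x5 = 0)) :
    3 * x1 ^ 2 + 2 * n1 * x2 ^ 2 + (2 * n2 + 1) * x3 ^ 2 + (2 * m3 ^ 2 + 1) * x4 ^ 2
        + (2 * m4 ^ 2 + 1) * x5 ^ 2 + 2 * m3 * m4 * x4 * x5
        + 2 * x1 * x3 + 2 * x1 * x4 + 2 * x1 * x5
      = 2 * n1 * x2 ^ 2 + 2 * n2 * x3 ^ 2 + m3 ^ 2 * x4 ^ 2 + m4 ^ 2 * x5 ^ 2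
        + (m3 * x4 + m4 * x5) ^ 2 + (x1 + x3) ^ 2 + (x1 + x4) ^ 2 + (x1 + x5) ^ 2 ∧
    3 ≤ 3 * x1 ^ 2 + 2 * n1 * x2 ^ 2 + (2 * n2 + 1) * x3 ^ 2 + (2 * m3 ^ 2 + 1) * x4 ^ 2
        + (2 * m4 ^ 2 + 1) * x5 ^ 2 + 2 * m3 * m4 * x4 * x5
        + 2 * x1 * x3 + 2 * x1 * x4 + 2 * x1 * x5 := by
  have key :
      3 * x1 ^ 2 + 2 * n1 * x2 ^ 2 + (2 * n2 + 1) * x3 ^ 2 + (2 * m3 ^ 2 + 1) * x4 ^ 2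
        + (2 * m4 ^ 2 + 1) * x5 ^ 2 + 2 * m3 * m4 * x4 * x5
        + 2 * x1 * x3 + 2 * x1 * x4 + 2 * x1 * x5
      = 2 * n1 * x2 ^ 2 + 2 * n2 * x3 ^ 2 + m3 ^ 2 * x4 ^ 2 + m4 ^ 2 * x5 ^ 2
        + (m3 * x4 + m4 * x5) ^ 2 + (x1 + x3) ^ 2 + (x1 + x4) ^ 2 + (x1 + x5) ^ 2 := by
    ring
  refine ⟨key, ?_⟩
  rw [key]
  have h0 : (0:ℤ) ≤ (m3 * x4 + m4 * x5) ^ 2 := sq_nonneg _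
  have h1 : (0:ℤ) ≤ (x1 + x3) ^ 2 := sq_nonneg _
  have h2 : (0:ℤ) ≤ (x1 + x4) ^ 2 := sq_nonneg _
  have h3 : (0:ℤ) ≤ (x1 + x5) ^ 2 := sq_nonneg _
  have h4 : (0:ℤ) ≤ x2 ^ 2 := sq_nonneg _
  have h5 : (0:ℤ) ≤ x3 ^ 2 := sq_nonneg _
  have h6 : (0:ℤ) ≤ x4 ^ 2 := sq_nonneg _
  have h7 : (0:ℤ) ≤ x5 ^ 2 := sq_nonneg _
  by_cases hx2 : x2 = 0
  · by_cases hx4 : x4 = 0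
    · by_cases hx5 : x5 = 0
      · by_cases hx3 : x3 = 0
        · have hx1 : x1 ≠ 0 := by
            intro h; exact hx ⟨h, hx2, hx3, hx4, hx5⟩
          have := one_le_sq_of_ne hx1
          subst hx2 hx3 hx4 hx5; nlinarith
        · have := one_le_sq_of_ne hx3
          by_cases hx1 : x1 = 0
          · subst hx1 hx2 hx4 hx5; nlinarith
          · have := one_le_sq_of_ne hx1
            subst hx2 hx4 hx5; nlinarith
      · have := one_le_sq_of_ne hx5
        nlinarith
    · have := one_le_sq_of_ne hx4
      nlinarith
  · have := one_le_sq_of_ne hx2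
    nlinarith
end

section
/- Let n1, n2 be integers with n1 ≥ 1 and n2 ≥ 1, and let m3, m4 be integers with m3 ≥ 2 and m4 ≥ 2. Then for every quintuple of integers (x1,...,x5), not all zero, one has 3*x1^2 + (2*n1+1)*x2^2 + (2*n2+1)*x3^2 + (2*m3^2+1)*x4^2 + (2*m4^2+1)*x5^2 + 2*m3*m4*x4*x5 + 2*x1*x2 + 2*x1*x3 + 2*x1*x4 + 2*x1*x5 ≥ 3. Equivalently, this quantity equals 2*n1*x2^2 + 2*n2*x3^2 + m3^2*x4^2 + m4^2*x5^2 + (m3*x4 + m4*x5)^2 + (x1+x2)^2 + (x1+x3)^2 + (x1+x4)^2 + (x1+x5)^2 − x1^2 and is at least 3 whenever (x1,...,x5) ≠ 0; in particular it never takes the value 2. -/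
lemma aux_sq2 (x y : ℤ) : (y = 0 ∧ y ^ 2 = 0 ∧ x * y = 0) ∨ 1 ≤ y ^ 2 := by
  rcases eq_or_ne y 0 with h | h
  · exact Or.inl ⟨h, by rw [h]; ring, by rw [h]; ring⟩
  · right
    have h1 : 1 ≤ |y| := Int.one_le_abs h
    nlinarith [sq_abs y, abs_nonneg y]

set_option maxHeartbeats 2000000 in
lemma key_F (x1 x2 x3 x4 x5 : ℤ) (hx : ¬(x1 = 0 ∧ x2 = 0 ∧ x3 = 0 ∧ x4 = 0 ∧ x5 = 0)) :
    3 ≤ 3 * x1 ^ 2 + 3 * x2 ^ 2 + 3 * x3 ^ 2 + 5 * x4 ^ 2 + 5 * x5 ^ 2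
      + 2 * x1 * x2 + 2 * x1 * x3 + 2 * x1 * x4 + 2 * x1 * x5 := by
  rcases aux_sq2 x1 x1 with ⟨e1, q1, c1⟩ | h1 <;> rcases aux_sq2 x1 x2 with ⟨e2, q2, c2⟩ | h2 <;>
    rcases aux_sq2 x1 x3 with ⟨e3, q3, c3⟩ | h3 <;> rcases aux_sq2 x1 x4 with ⟨e4, q4, c4⟩ | h4 <;>
    rcases aux_sq2 x1 x5 with ⟨e5, q5, c5⟩ | h5
  · exact absurd ⟨e1, e2, e3, e4, e5⟩ hx
  all_goals nlinarith [sq_nonneg (x1 + x2), sq_nonneg (x1 + x3), sq_nonneg (x1 + x4),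
        sq_nonneg (x1 + x5), sq_nonneg x1]

/-- Case 5 of the case n = 4 of Theorem 3.7: the norm form of the rank-5 lattice
with Gram matrix `[[3,1,1,1,1],[1,2n₁+1,0,0,0],[1,0,2n₂+1,0,0],[1,0,0,2m₃²+1,m₃m₄],
[1,0,0,m₃m₄,2m₄²+1]]` equals
`2n₁x₂² + 2n₂x₃² + m₃²x₄² + m₄²x₅² + (m₃x₄+m₄x₅)² + (x₁+x₂)² + (x₁+x₃)²
 + (x₁+x₄)² + (x₁+x₅)² − x₁²`, takes values ≥ 3 on nonzero integer vectors,
and in particular never takes the value 2. -/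
theorem stmt_8 (n1 n2 m3 m4 : ℤ) (hn1 : 1 ≤ n1) (hn2 : 1 ≤ n2)
    (hm3 : 2 ≤ m3) (hm4 : 2 ≤ m4)
    (x1 x2 x3 x4 x5 : ℤ) (hx : ¬(x1 = 0 ∧ x2 = 0 ∧ x3 = 0 ∧ x4 = 0 ∧ x5 = 0)) :
    3 * x1 ^ 2 + (2 * n1 + 1) * x2 ^ 2 + (2 * n2 + 1) * x3 ^ 2 + (2 * m3 ^ 2 + 1) * x4 ^ 2
        + (2 * m4 ^ 2 + 1) * x5 ^ 2 + 2 * m3 * m4 * x4 * x5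
        + 2 * x1 * x2 + 2 * x1 * x3 + 2 * x1 * x4 + 2 * x1 * x5
      = 2 * n1 * x2 ^ 2 + 2 * n2 * x3 ^ 2 + m3 ^ 2 * x4 ^ 2 + m4 ^ 2 * x5 ^ 2
        + (m3 * x4 + m4 * x5) ^ 2 + (x1 + x2) ^ 2 + (x1 + x3) ^ 2 + (x1 + x4) ^ 2
        + (x1 + x5) ^ 2 - x1 ^ 2 ∧
    3 ≤ 3 * x1 ^ 2 + (2 * n1 + 1) * x2 ^ 2 + (2 * n2 + 1) * x3 ^ 2 + (2 * m3 ^ 2 + 1) * x4 ^ 2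
        + (2 * m4 ^ 2 + 1) * x5 ^ 2 + 2 * m3 * m4 * x4 * x5
        + 2 * x1 * x2 + 2 * x1 * x3 + 2 * x1 * x4 + 2 * x1 * x5 ∧
    3 * x1 ^ 2 + (2 * n1 + 1) * x2 ^ 2 + (2 * n2 + 1) * x3 ^ 2 + (2 * m3 ^ 2 + 1) * x4 ^ 2
        + (2 * m4 ^ 2 + 1) * x5 ^ 2 + 2 * m3 * m4 * x4 * x5
        + 2 * x1 * x2 + 2 * x1 * x3 + 2 * x1 * x4 + 2 * x1 * x5 ≠ 2 := by
  have hF := key_F x1 x2 x3 x4 x5 hx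
  have h34 : (0:ℤ) ≤ (m3 ^ 2 - 4) * x4 ^ 2 :=
    mul_nonneg (by nlinarith) (sq_nonneg x4)
  have h45 : (0:ℤ) ≤ (m4 ^ 2 - 4) * x5 ^ 2 :=
    mul_nonneg (by nlinarith) (sq_nonneg x5)
  have hn1' : (0:ℤ) ≤ 2 * (n1 - 1) * x2 ^ 2 :=
    mul_nonneg (by linarith) (sq_nonneg x2)
  have hn2' : (0:ℤ) ≤ 2 * (n2 - 1) * x3 ^ 2 :=
    mul_nonneg (by linarith) (sq_nonneg x3)
  have hcross : (0:ℤ) ≤ (m3 * x4 + m4 * x5) ^ 2 := sq_nonneg _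
  have hge : 3 ≤ 3 * x1 ^ 2 + (2 * n1 + 1) * x2 ^ 2 + (2 * n2 + 1) * x3 ^ 2
      + (2 * m3 ^ 2 + 1) * x4 ^ 2 + (2 * m4 ^ 2 + 1) * x5 ^ 2 + 2 * m3 * m4 * x4 * x5
      + 2 * x1 * x2 + 2 * x1 * x3 + 2 * x1 * x4 + 2 * x1 * x5 := by nlinarith
  exact ⟨by ring, hge, by omega⟩
end

section
/- Let n1, n2 be integers with n1 ≥ 1 and n2 ≥ 1, and let m3, m4 be integers with m3 ≥ 1 and m4 ≥ 1. Then the real symmetric 5×5 matrix [[3,1,1,1,1],[1,2n1+1,0,0,0],[1,0,2n2+1,0,0],[1,0,0,2m3^2+1,m3*m4],[1,0,0,m3*m4,2m4^2+1]] is positive definite. -/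
/-- The Gram matrix of the rank-5 lattice constructed in Case 5 of the case
n = 4 of Theorem 3.7 is positive definite (as a real symmetric matrix), for all
integers `n₁, n₂ ≥ 1` and `m₃, m₄ ≥ 1`. -/
theorem stmt_17 (n1 n2 m3 m4 : ℤ) (hn1 : 1 ≤ n1) (hn2 : 1 ≤ n2)
    (hm3 : 1 ≤ m3) (hm4 : 1 ≤ m4) :
    (!![(3 : ℝ), 1, 1, 1, 1;
        1, 2 * (n1 : ℝ) + 1, 0, 0, 0;
        1, 0, 2 * (n2 : ℝ) + 1, 0, 0;
        1, 0, 0, 2 * (m3 : ℝ) ^ 2 + 1, (m3 : ℝ) * (m4 : ℝ);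
        1, 0, 0, (m3 : ℝ) * (m4 : ℝ), 2 * (m4 : ℝ) ^ 2 + 1]).PosDef := by
  have hn1' : (1 : ℝ) ≤ (n1 : ℝ) := by exact_mod_cast hn1
  have hn2' : (1 : ℝ) ≤ (n2 : ℝ) := by exact_mod_cast hn2
  have hm3' : (1 : ℝ) ≤ (m3 : ℝ) := by exact_mod_cast hm3
  have hm4' : (1 : ℝ) ≤ (m4 : ℝ) := by exact_mod_cast hm4
  rw [Matrix.posDef_iff_dotProduct_mulVec]
  constructor
  · ext i j
    fin_cases i <;> fin_cases j <;>
      simp [Matrix.conjTranspose_apply, Matrix.vecHead, Matrix.vecTail, mul_comm]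
  · intro x hx
    obtain ⟨i, hi⟩ := Function.ne_iff.mp hx
    simp only [Pi.zero_apply] at hi
    have hpos : 0 < ∑ j, x j ^ 2 :=
      Finset.sum_pos' (fun j _ => sq_nonneg _) ⟨i, Finset.mem_univ i, by positivity⟩
    rw [Fin.sum_univ_five] at hpos
    simp [star_trivial, dotProduct, Matrix.mulVec, Fin.sum_univ_five,
      Matrix.cons_val_zero, Matrix.cons_val_one, Matrix.cons_val_succ, Matrix.head_cons, Matrix.vecHead, Matrix.vecTail]
    nlinarith [sq_nonneg (5 * x 1 + 2 * x 0), sq_nonneg (5 * x 2 + 2 * x 0),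
      sq_nonneg (3 * x 3 + 2 * x 0), sq_nonneg (3 * x 4 + 2 * x 0),
      sq_nonneg ((m3 : ℝ) * x 3 + (m4 : ℝ) * x 4),
      mul_nonneg (sub_nonneg.2 hn1') (sq_nonneg (x 1)),
      mul_nonneg (sub_nonneg.2 hn2') (sq_nonneg (x 2)),
      mul_nonneg (mul_nonneg (sub_nonneg.2 hm3') (by linarith : (0:ℝ) ≤ (m3:ℝ) + 1)) (sq_nonneg (x 3)),
      mul_nonneg (mul_nonneg (sub_nonneg.2 hm4') (by linarith : (0:ℝ) ≤ (m4:ℝ) + 1)) (sq_nonneg (x 4)),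
      hpos]
end
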